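/- Let f : ℝ^N → ℝ be differentiable with each ∇_i f coordinate-wise L-Lipschitz, let 0 < γ < 2/L, and let the sequence x^{k+1} differ from x^k only in coordinate i_k with x^{k+1}_{i_k} = x^k_{i_k} − γ(∇_{i_k} f(x^k) + ε^k). Then for every k, f(x^{k+1}) ≤ f(x^k) + (L/4 − 1/(2γ))‖x^{k+1} − x^k‖² + γ‖ε^k‖²/(2 − Lγ). -/

import Mathlib

open EuclideanSpace

private lemma quad_ub (φ ψ : ℝ → ℝ) (L : ℝ) (hL : 0 ≤ L)
    (hd : ∀ t, HasDerivAt φ (ψ t) t)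
    (hlip : ∀ t, |ψ 0 - ψ t| ≤ L * |t|) (d : ℝ) :
    φ d ≤ φ 0 + ψ 0 * d + L / 2 * d ^ 2 := by
  set h : ℝ → ℝ := fun t => φ 0 + ψ 0 * t + L / 2 * t ^ 2 - φ t with hh
  have hder : ∀ t, HasDerivAt h (ψ 0 + L * t - ψ t) t := by
    intro t
    have h1 : HasDerivAt (fun t : ℝ => φ 0 + ψ 0 * t + L / 2 * t ^ 2)
        (0 + ψ 0 * 1 + L / 2 * (2 * t ^ 1)) t :=
      ((hasDerivAt_const t (φ 0)).add ((hasDerivAt_id t).const_mul (ψ 0))).add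
        ((hasDerivAt_pow 2 t).const_mul (L / 2))
    have h2 := h1.sub (hd t)
    refine h2.congr_deriv ?_
    ring
  have hderiv : ∀ t, deriv h t = ψ 0 + L * t - ψ t := fun t => (hder t).deriv
  have hdiff : Differentiable ℝ h := fun t => (hder t).differentiableAt
  have hmono : MonotoneOn h (Set.Ici 0) := by
    apply monotoneOn_of_deriv_nonneg (convex_Ici 0) hdiff.continuous.continuousOn
      hdiff.differentiableOn
    intro t ht
    rw [interior_Ici] at ht
    have ht' : (0:ℝ) < t := ht
    have := hlip t
    rw [abs_of_pos ht'] at this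
    have := abs_le.1 this
    rw [hderiv]
    linarith [this.1, this.2]
  have hanti : AntitoneOn h (Set.Iic 0) := by
    apply antitoneOn_of_deriv_nonpos (convex_Iic 0) hdiff.continuous.continuousOn
      hdiff.differentiableOn
    intro t ht
    rw [interior_Iic] at ht
    have ht' : t < (0:ℝ) := ht
    have := hlip t
    rw [abs_of_neg ht'] at this
    have := abs_le.1 this
    rw [hderiv]
    linarith [this.1, this.2]
  have h0 : h 0 = 0 := by simp [hh]
  have hnn : 0 ≤ h d := by
    rcases le_or_gt 0 d with hd0 | hd0
    · have := hmono (Set.self_mem_Ici) (Set.mem_Ici.2 hd0) hd0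
      linarith
    · have := hanti (Set.mem_Iic.2 hd0.le) (Set.self_mem_Iic) hd0.le
      linarith
  simp only [hh] at hnn
  linarith

theorem stmt_3 {N : ℕ} (f : EuclideanSpace ℝ (Fin N) → ℝ) (L γ : ℝ) (hL : 0 < L)
    (hγ : 0 < γ) (hγ2 : γ < 2 / L)
    (hdiff : Differentiable ℝ f)
    (hlip : ∀ (i : Fin N) (x : EuclideanSpace ℝ (Fin N)) (α : ℝ),
      |gradient f x i - gradient f (x + EuclideanSpace.single i α) i| ≤ L * |α|)
    (x : ℕ → EuclideanSpace ℝ (Fin N)) (i : ℕ → Fin N) (ε : ℕ → ℝ)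
    (hupd : ∀ k, x (k + 1) (i k) = x k (i k) - γ * (gradient f (x k) (i k) + ε k))
    (hfix : ∀ k, ∀ j : Fin N, j ≠ i k → x (k + 1) j = x k j) :
    ∀ k : ℕ, f (x (k + 1)) ≤ f (x k) + (L / 4 - 1 / (2 * γ)) * ‖x (k + 1) - x k‖ ^ 2
      + γ * (ε k) ^ 2 / (2 - L * γ) := by
  intro k
  set X := x k with hX
  set j := i k with hj
  set e := ε k with he
  set g := gradient f X j with hg
  set d : ℝ := -(γ * (g + e)) with hd
  have hLγ : L * γ < 2 := by
    rw [lt_div_iff₀ hL] at hγ2; linarith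
  have hsingle0 : EuclideanSpace.single j (0:ℝ) = 0 := by
    ext j'; simp [EuclideanSpace.single_apply]
  have hstep : x (k + 1) = X + EuclideanSpace.single j d := by
    ext j'
    show x (k + 1) j' = X j' + EuclideanSpace.single j d j'
    by_cases hjj : j' = j
    · subst hjj
      rw [EuclideanSpace.single_apply, if_pos rfl, hupd k]
      simp [hd, hg, he]
      ring
    · rw [hfix k j' hjj, EuclideanSpace.single_apply, if_neg hjj, add_zero]
  have hdiffx : x (k + 1) - x k = EuclideanSpace.single j d := by
    rw [hstep, ← hX, add_sub_cancel_left]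
  have hnorm : ‖x (k + 1) - x k‖ = |d| := by
    rw [hdiffx, EuclideanSpace.norm_single, Real.norm_eq_abs]
  -- 1-D restriction
  set φ : ℝ → ℝ := fun t => f (X + EuclideanSpace.single j t) with hφ
  set ψ : ℝ → ℝ := fun t => gradient f (X + EuclideanSpace.single j t) j with hψ
  have hdφ : ∀ t, HasDerivAt φ (ψ t) t := by
    intro t
    have hsm : (fun t : ℝ => X + EuclideanSpace.single j t)
        = fun t : ℝ => X + t • EuclideanSpace.single j (1:ℝ) := by
      funext t
      congr 1
      ext j'
      show EuclideanSpace.single j t j' = t * EuclideanSpace.single j (1:ℝ) j'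
      simp [EuclideanSpace.single_apply]
    have hc : HasDerivAt (fun t : ℝ => X + EuclideanSpace.single j t)
        (EuclideanSpace.single j (1:ℝ)) t := by
      rw [hsm]
      have := ((hasDerivAt_id t).smul_const (EuclideanSpace.single j (1:ℝ))).const_add X
      simpa using this
    have hf' : HasFDerivAt f
        ((InnerProductSpace.toDual ℝ _) (gradient f (X + EuclideanSpace.single j t)) :
          EuclideanSpace ℝ (Fin N) →L[ℝ] ℝ)
        (X + EuclideanSpace.single j t) :=
      ((hdiff _).hasGradientAt).hasFDerivAt
    have hcomp := hf'.comp_hasDerivAt t hc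
    refine hcomp.congr_deriv ?_
    rw [InnerProductSpace.toDual_apply_apply, EuclideanSpace.inner_single_right]
    simp [hψ]
  have hlipφ : ∀ t, |ψ 0 - ψ t| ≤ L * |t| := by
    intro t
    have := hlip j X t
    simpa [hψ, hsingle0, hg] using this
  have key := quad_ub φ ψ L hL.le hdφ hlipφ d
  have hφd : φ d = f (x (k + 1)) := by rw [hφ]; rw [hstep]
  have hφ0 : φ 0 = f X := by simp [hφ, hsingle0]
  have hψ0 : ψ 0 = g := by simp [hψ, hsingle0, hg]
  rw [hφd, hφ0, hψ0] at key
  rw [hnorm, sq_abs]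
  have h2 : 0 < 2 - L * γ := by linarith
  refine key.trans ?_
  have hgval : g = (-d - γ * e) / γ := by
    rw [eq_div_iff hγ.ne']
    rw [hd]; ring
  have harith : g * d + L / 2 * d ^ 2 ≤ (L / 4 - 1 / (2 * γ)) * d ^ 2
      + γ * e ^ 2 / (2 - L * γ) := by
    rw [← sub_nonneg]
    have heq : (L / 4 - 1 / (2 * γ)) * d ^ 2 + γ * e ^ 2 / (2 - L * γ)
        - (g * d + L / 2 * d ^ 2)
        = ((2 - L * γ) * d + 2 * γ * e) ^ 2 / (4 * γ * (2 - L * γ)) := by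
      rw [hgval]
      field_simp
      ring
    rw [heq]
    positivity
  linarith
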